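/- Let k be an integer with k ≠ 0 and k ≠ 1, let h : ℝ → ℝ be twice differentiable with h(t) > 0 for all t, and let λ₀, c₀ ∈ ℝ. Then the pair of equations [for all t ∈ ℝ: k·(h''(t) − h'(t)) = −λ₀·h(t), and −λ₀·h(t)² − h''(t)·h(t) − (k−1)·h'(t)² + (2k−1)·h(t)·h'(t) − (k−1)·h(t)² = c₀] holds if and only if λ₀ = 0 and there exist constants c₁, c₂ ∈ ℝ such that h(t) = c₁·exp(t) + c₂ for all t ∈ ℝ and c₀ = −(k−1)·c₂². -/

import Mathlib

/-- For an integer k ∉ {0,1}, h > 0 twice differentiable, the system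
[k(h'' − h') = −λ₀ h and −λ₀ h² − h'' h − (k−1)(h')² + (2k−1)h h' − (k−1)h² = c₀]
holds iff λ₀ = 0 and there are c₁, c₂ with h(t) = c₁ exp(t) + c₂ and c₀ = −(k−1)c₂². -/
theorem superWarped_einstein_iff_general_k
    (k : ℤ) (hk0 : k ≠ 0) (hk1 : k ≠ 1)
    (h : ℝ → ℝ) (hpos : ∀ t : ℝ, 0 < h t)
    (hd1 : Differentiable ℝ h) (hd2 : Differentiable ℝ (deriv h))
    (lam c₀ : ℝ) :
    ((∀ t : ℝ, (k : ℝ) * (deriv (deriv h) t - deriv h t) = -lam * h t) ∧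
      (∀ t : ℝ, -lam * h t ^ 2 - deriv (deriv h) t * h t
        - ((k : ℝ) - 1) * deriv h t ^ 2 + (2 * (k : ℝ) - 1) * h t * deriv h t
        - ((k : ℝ) - 1) * h t ^ 2 = c₀)) ↔
      (lam = 0 ∧ ∃ c₁ c₂ : ℝ, (∀ t : ℝ, h t = c₁ * Real.exp t + c₂) ∧
        c₀ = -((k : ℝ) - 1) * c₂ ^ 2) := by
  have hK0 : (k : ℝ) ≠ 0 := Int.cast_ne_zero.mpr hk0
  have hK1 : (k : ℝ) ≠ 1 := by exact_mod_cast (Int.cast_injective.ne_iff).mpr hk1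
  set K : ℝ := (k : ℝ) with hKdef
  constructor
  · rintro ⟨eq1, eq2⟩
    set a : ℝ := lam / K with ha
    have hlam : lam = K * a := by rw [ha, mul_div_assoc', mul_div_cancel_left₀ lam hK0]
    -- h'' = h' - a h
    have h2eq : ∀ t, deriv (deriv h) t = deriv h t - a * h t := by
      intro t
      have e := eq1 t
      have e3 : K * (deriv (deriv h) t - (deriv h t - a * h t)) = 0 := by
        linear_combination e - h t * hlam
      have e4 := (mul_eq_zero.mp e3).resolve_left hK0
      linarith [e4]
    have hddfun : deriv (deriv h) = fun s => deriv h s - a * h s := funext h2eq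
    -- HasDerivAt for the third derivative surrogate
    have D1 : ∀ t, HasDerivAt h (deriv h t) t := fun t => (hd1 t).hasDerivAt
    have D2 : ∀ t, HasDerivAt (deriv h) (deriv (deriv h) t) t :=
      fun t => (hd2 t).hasDerivAt
    have D3 : ∀ t, HasDerivAt (deriv (deriv h))
        (deriv (deriv h) t - a * deriv h t) t := by
      intro t
      have := (D2 t).sub ((D1 t).const_mul a)
      have e5 : (deriv h - fun y => a * h y) = deriv (deriv h) := funext fun s => (h2eq s).symm
      rwa [e5] at this
    -- F is the left side of eq2
    set F : ℝ → ℝ := fun s => -lam * h s ^ 2 - deriv (deriv h) s * h s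
        - (K - 1) * deriv h s ^ 2 + (2 * K - 1) * (h s * deriv h s)
        - (K - 1) * h s ^ 2 with hF
    have hFconst : F = fun _ => c₀ := funext fun t => by linear_combination eq2 t
    have hFderiv : ∀ t, HasDerivAt F
        (-lam * (2 * h t * deriv h t)
          - ((deriv (deriv h) t - a * deriv h t) * h t + deriv (deriv h) t * deriv h t)
          - (K - 1) * (2 * deriv h t * deriv (deriv h) t)
          + ((2 * K - 1) * (deriv h t * deriv h t + h t * deriv (deriv h) t))
          - (K - 1) * (2 * h t * deriv h t)) t := by
      intro t
      have p1 : HasDerivAt (fun s => h s ^ 2) (2 * h t * deriv h t) t := by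
        have := (D1 t).pow 2
        show HasDerivAt (h ^ 2) (2 * h t * deriv h t) t
        simpa [mul_comm, mul_assoc, mul_left_comm] using this
      have p2 : HasDerivAt (fun s => deriv h s ^ 2)
          (2 * deriv h t * deriv (deriv h) t) t := by
        have := (D2 t).pow 2
        show HasDerivAt (deriv h ^ 2) (2 * deriv h t * deriv (deriv h) t) t
        simpa [mul_comm, mul_assoc, mul_left_comm] using this
      have p3 : HasDerivAt (fun s => deriv (deriv h) s * h s)
          ((deriv (deriv h) t - a * deriv h t) * h t + deriv (deriv h) t * deriv h t) t :=
        (D3 t).mul (D1 t)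
      have p4 : HasDerivAt (fun s => h s * deriv h s)
          (deriv h t * deriv h t + h t * deriv (deriv h) t) t :=
        (D1 t).mul (D2 t)
      exact ((((p1.const_mul (-lam)).sub p3).sub (p2.const_mul (K - 1))).add
        (p4.const_mul (2 * K - 1))).sub (p1.const_mul (K - 1))
    have hzero : ∀ t, 2 * a * (1 - K) * h t ^ 2 = 0 := by
      intro t
      have hv : deriv F t = 0 := by rw [hFconst]; simp
      have hv2 := (hFderiv t).deriv
      rw [hv] at hv2
      have e2 := h2eq t
      rw [hlam] at hv2
      rw [e2] at hv2
      linear_combination -hv2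
    have haz : a = 0 := by
      have h0 := hzero 0
      have hne : (2 : ℝ) * (1 - K) * h 0 ^ 2 ≠ 0 := by
        have : h 0 ≠ 0 := ne_of_gt (hpos 0)
        have h1K : (1 : ℝ) - K ≠ 0 := sub_ne_zero.mpr (Ne.symm hK1)
        positivity
      have : a * (2 * (1 - K) * h 0 ^ 2) = 0 := by linarith [h0]
      rcases mul_eq_zero.mp this with h' | h'
      · exact h'
      · exact absurd h' hne
    have hlam0 : lam = 0 := by rw [hlam, haz, mul_zero]
    refine ⟨hlam0, ?_⟩
    -- now h'' = h'
    have hpp : ∀ t, deriv (deriv h) t = deriv h t := by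
      intro t; rw [h2eq t, haz]; ring
    -- exp(-t) * h' is constant
    set g : ℝ → ℝ := fun s => Real.exp (-s) * deriv h s with hg
    have hgd : ∀ t, HasDerivAt g 0 t := by
      intro t
      have e1 : HasDerivAt (fun s : ℝ => Real.exp (-s)) (Real.exp (-t) * (-1)) t :=
        ((hasDerivAt_neg t).exp)
      have := e1.mul (D2 t)
      rw [hpp t] at this
      exact this.congr_deriv (by ring)
    have hgc : ∀ t, g t = g 0 :=
      fun t => is_const_of_deriv_eq_zero (fun s => (hgd s).differentiableAt)
        (fun s => (hgd s).deriv) t 0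
    set C : ℝ := deriv h 0 with hC
    have hder : ∀ t, deriv h t = C * Real.exp t := by
      intro t
      have := hgc t
      simp only [hg] at this
      have hexp : Real.exp (-t) ≠ 0 := Real.exp_ne_zero _
      have : Real.exp (-t) * deriv h t = Real.exp 0 * deriv h 0 := by
        simpa using this
      rw [Real.exp_zero, one_mul] at this
      have ht : deriv h t = deriv h 0 / Real.exp (-t) := by
        field_simp at this ⊢; linarith
      rw [ht, Real.exp_neg]
      field_simp [hC]
      exact hC.symm
    -- h - C exp is constant
    set φ : ℝ → ℝ := fun s => h s - C * Real.exp s with hφ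
    have hφd : ∀ t, HasDerivAt φ 0 t := by
      intro t
      have := (D1 t).sub ((Real.hasDerivAt_exp t).const_mul C)
      rw [hder t] at this
      exact this.congr_deriv (by ring)
    have hφc : ∀ t, φ t = φ 0 :=
      fun t => is_const_of_deriv_eq_zero (fun s => (hφd s).differentiableAt)
        (fun s => (hφd s).deriv) t 0
    refine ⟨C, h 0 - C, ?_, ?_⟩
    · intro t
      have := hφc t
      simp only [hφ] at this
      rw [Real.exp_zero] at this
      linarith
    · have e := eq2 0
      have h0 : h 0 = C + (h 0 - C) := by ring
      rw [hpp 0, hlam0] at e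
      rw [← hC] at e
      nlinarith [e]
  · rintro ⟨hlam0, c₁, c₂, hh, hc₀⟩
    have hfun : h = fun t => c₁ * Real.exp t + c₂ := funext hh
    have hder : ∀ t, deriv h t = c₁ * Real.exp t := by
      intro t
      rw [hfun]
      exact (((Real.hasDerivAt_exp t).const_mul c₁).add_const c₂).deriv
    have hder2 : ∀ t, deriv (deriv h) t = c₁ * Real.exp t := by
      intro t
      have : deriv h = fun s => c₁ * Real.exp s := funext hder
      rw [this]
      exact ((Real.hasDerivAt_exp t).const_mul c₁).deriv
    constructor
    · intro t
      rw [hder, hder2, hh, hlam0]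
      ring
    · intro t
      rw [hder, hder2, hh, hlam0, hc₀]
      ring
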